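/- Let 𝒟 ⊆ 𝒞 be subcategories of 𝓑 satisfying condition (RCP), ℋ_𝒟 := CoCone(𝒟,𝒞), ℋ := CoCone(𝒞,𝒞), and let ℋ/𝒞 be the heart of (𝒞,𝒞^⊥¹). Suppose 0→Z→Y→f→X→0 is a short exact sequence with Y ∈ ℋ_𝒟, f a right ℋ_𝒟-approximation of X, and Z ∈ 𝒟^⊥¹. If X ∈ ℋ, then the image f̄ of f in the heart ℋ/𝒞 is an epimorphism. -/

import Mathlib

open CategoryTheory Category Limits ZeroObject

universe v u

namespace CotorsionPaper

variable {B : Type u} [Category.{v} B] [Abelian B]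

/-- `f, g` form a short exact sequence `0 → X → Y → Z → 0`. -/
def IsSES {X Y Z : B} (f : X ⟶ Y) (g : Y ⟶ Z) : Prop :=
  ∃ w : f ≫ g = 0, (ShortComplex.mk f g w).ShortExact

/-- `Ext¹(X, Y) = 0`: every short exact sequence `0 → Y → E → X → 0` splits. -/
def Ext1Zero (X Y : B) : Prop :=
  ∀ ⦃E : B⦄ (i : Y ⟶ E) (p : E ⟶ X), IsSES i p → ∃ s : X ⟶ E, s ≫ p = 𝟙 X

/-- `Ext²(X, Y) = 0`, via dimension shifting: `Ext¹(K, Y) = 0` for any syzygy `K` of `X`. -/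
def Ext2Zero (X Y : B) : Prop :=
  ∀ ⦃K P : B⦄ (i : K ⟶ P) (p : P ⟶ X), Projective P → IsSES i p → Ext1Zero K Y

/-- A (strictly) full additive subcategory: closed under isomorphisms,
contains a zero object and is closed under finite direct sums. -/
structure AddSubcat (S : Set B) : Prop where
  zero_mem : (0 : B) ∈ S
  iso_closed : ∀ ⦃X Y : B⦄, (X ≅ Y) → X ∈ S → Y ∈ S
  sum_closed : ∀ ⦃X Y : B⦄, X ∈ S → Y ∈ S → (X ⊞ Y) ∈ S

/-- `S` is closed under direct summands (retracts). -/
def ClosedUnderSummands (S : Set B) : Prop :=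
  ∀ ⦃X Y : B⦄ (r : X ⟶ Y) (s : Y ⟶ X), s ≫ r = 𝟙 Y → X ∈ S → Y ∈ S

/-- `S` is rigid: `Ext¹(X, Y) = 0` for all `X, Y ∈ S`. -/
def Rigid (S : Set B) : Prop :=
  ∀ ⦃X⦄, X ∈ S → ∀ ⦃Y⦄, Y ∈ S → Ext1Zero X Y

/-- `S^⊥¹`. -/
def rightPerp (S : Set B) : Set B := {Y | ∀ ⦃X⦄, X ∈ S → Ext1Zero X Y}

/-- `^⊥¹S`. -/
def leftPerp (S : Set B) : Set B := {X | ∀ ⦃Y⦄, Y ∈ S → Ext1Zero X Y}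

/-- `f : X ⟶ A` is a right `S`-approximation of `A`. -/
def IsRightApprox (S : Set B) {X A : B} (f : X ⟶ A) : Prop :=
  X ∈ S ∧ ∀ ⦃X' : B⦄, X' ∈ S → ∀ g : X' ⟶ A, ∃ h : X' ⟶ X, h ≫ f = g

def ContravariantlyFinite (S : Set B) : Prop :=
  ∀ A : B, ∃ (X : B) (f : X ⟶ A), IsRightApprox S f

/-- `f : A ⟶ X` is a left `S`-approximation of `A`. -/
def IsLeftApprox (S : Set B) {A X : B} (f : A ⟶ X) : Prop :=
  X ∈ S ∧ ∀ ⦃X' : B⦄, X' ∈ S → ∀ g : A ⟶ X', ∃ h : X ⟶ X', f ≫ h = g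

def CovariantlyFinite (S : Set B) : Prop :=
  ∀ A : B, ∃ (X : B) (f : A ⟶ X), IsLeftApprox S f

/-- `(U, V)` is a cotorsion pair. -/
structure CotorsionPair (U V : Set B) : Prop where
  summands_left : ClosedUnderSummands U
  summands_right : ClosedUnderSummands V
  ext : ∀ ⦃X⦄, X ∈ U → ∀ ⦃Y⦄, Y ∈ V → Ext1Zero X Y
  resol : ∀ X : B, ∃ (VX UX : B) (i : VX ⟶ UX) (p : UX ⟶ X),
    VX ∈ V ∧ UX ∈ U ∧ IsSES i p
  coresol : ∀ X : B, ∃ (VX UX : B) (i : X ⟶ VX) (p : VX ⟶ UX),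
    VX ∈ V ∧ UX ∈ U ∧ IsSES i p

/-- `CoCone(S, T)`. -/
def CoCone (S T : Set B) : Set B :=
  {X | ∃ (B' B'' : B) (i : X ⟶ B') (p : B' ⟶ B''), B' ∈ S ∧ B'' ∈ T ∧ IsSES i p}

/-- `Cone(S, T)`. -/
def Cone (S T : Set B) : Set B :=
  {X | ∃ (B' B'' : B) (i : B' ⟶ B'') (p : B'' ⟶ X), B' ∈ S ∧ B'' ∈ T ∧ IsSES i p}

/-- The subcategory `𝒫` of projective objects. -/
def projSet : Set B := {P | Projective P}

/-- The subcategory `ℐ` of injective objects. -/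
def injSet : Set B := {I | Injective I}

/-- `Ω𝒞`, the (first) syzygy of `𝒞`. -/
def Syz (C : Set B) : Set B := CoCone projSet C

/-- Condition (RCP): `𝒫 ⊆ 𝒞`, `𝒞` rigid, contravariantly finite,
closed under direct summands (and a full additive subcategory). -/
structure RCP (C : Set B) : Prop where
  add : AddSubcat C
  proj_mem : ∀ ⦃P : B⦄, Projective P → P ∈ C
  rigid : Rigid C
  contra : ContravariantlyFinite C
  summands : ClosedUnderSummands C

/-- `f` factors through an object of `S`. -/
def FactorsThru (S : Set B) {X Y : B} (f : X ⟶ Y) : Prop :=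
  ∃ (Z : B) (g : X ⟶ Z) (h : Z ⟶ Y), Z ∈ S ∧ g ≫ h = f

/-- The ideal of morphisms of the full subcategory on `H` factoring through an object of `S`. -/
def idealRel (H S : Set B) : HomRel (ObjectProperty.FullSubcategory (fun X : B => H X)) :=
  fun X Y f g => FactorsThru S (show X.obj ⟶ Y.obj from f.hom - g.hom)

/-- The ideal quotient `H/S`. -/
abbrev HeartCat (H S : Set B) := CategoryTheory.Quotient (idealRel H S)

/-- The quotient functor `H → H/S`. -/
abbrev heartQ (H S : Set B) : ObjectProperty.FullSubcategory (fun X : B => H X) ⥤ HeartCat H S :=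
  CategoryTheory.Quotient.functor _

/-- The zero morphism in the ideal quotient `H/S`. -/
def heartZero (H S : Set B) (X Y : HeartCat H S) : X ⟶ Y :=
  (heartQ H S).map (ObjectProperty.homMk (0 : X.as.obj ⟶ Y.as.obj))

/-- `κ` is a kernel of `φ` in the ideal quotient `H/S`. -/
structure IsKernelArrow {H S : Set B} {K X Y : HeartCat H S}
    (κ : K ⟶ X) (φ : X ⟶ Y) : Prop where
  w : κ ≫ φ = heartZero H S K Y
  lift : ∀ ⦃T : HeartCat H S⦄ (t : T ⟶ X), t ≫ φ = heartZero H S T Y →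
    ∃! u : T ⟶ K, u ≫ κ = t

/-- `π` is a cokernel of `φ` in the ideal quotient `H/S`. -/
structure IsCokernelArrow {H S : Set B} {X Y Q : HeartCat H S}
    (φ : X ⟶ Y) (π : Y ⟶ Q) : Prop where
  w : φ ≫ π = heartZero H S X Q
  desc : ∀ ⦃T : HeartCat H S⦄ (t : Y ⟶ T), φ ≫ t = heartZero H S X T →
    ∃! u : Q ⟶ T, π ≫ u = t

/-- The class of epimorphisms in `H/S` whose kernel object lies in `A`. -/
def epiClassWithKernelIn (H S A : Set B) : MorphismProperty (HeartCat H S) :=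
  fun X Y φ => Epi φ ∧ ∃ (K : HeartCat H S) (κ : K ⟶ X),
    K.as.obj ∈ A ∧ IsKernelArrow κ φ

/-- The class of monomorphisms in `H/S` whose cokernel object lies in `A`. -/
def monoClassWithCokernelIn (H S A : Set B) : MorphismProperty (HeartCat H S) :=
  fun X Y φ => Mono φ ∧ ∃ (Q : HeartCat H S) (π : Y ⟶ Q),
    Q.as.obj ∈ A ∧ IsCokernelArrow φ π

/-- The diagram `(⋄)` associated with a morphism `f : Y ⟶ X`. -/
structure DiamondDiagram {Y X : B} (f : Y ⟶ X) {OmX PX Z₁ IY SgY Z₂ : B}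
    (q : OmX ⟶ PX) (p : PX ⟶ X) (j : OmX ⟶ Z₁) (g : Z₁ ⟶ Y)
    (i : Y ⟶ IY) (c : IY ⟶ SgY) (h : X ⟶ Z₂) (e : Z₂ ⟶ SgY)
    (u : Z₁ ⟶ PX) (v : IY ⟶ Z₂) : Prop where
  projPX : Projective PX
  injIY : Injective IY
  ses_proj : IsSES q p
  ses_pullback : IsSES j g
  ses_inj : IsSES i c
  ses_pushout : IsSES h e
  comm₁ : j ≫ u = q
  comm₂ : u ≫ p = g ≫ f
  comm₃ : f ≫ h = i ≫ v
  comm₄ : v ≫ e = c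

/-- The class of morphisms `f : Y ⟶ X` admitting a diagram `(⋄)` with
`Z₁ ∈ ZCond` and `h` factoring through an object of `HCond`. -/
def Rclass (ZCond HCond : Set B) : MorphismProperty B :=
  fun Y X f => ∃ (OmX PX Z₁ IY SgY Z₂ : B) (q : OmX ⟶ PX) (p : PX ⟶ X)
    (j : OmX ⟶ Z₁) (g : Z₁ ⟶ Y) (i : Y ⟶ IY) (c : IY ⟶ SgY)
    (h : X ⟶ Z₂) (e : Z₂ ⟶ SgY) (u : Z₁ ⟶ PX) (v : IY ⟶ Z₂),
    DiamondDiagram f q p j g i c h e u v ∧ Z₁ ∈ ZCond ∧ FactorsThru HCond h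

/-- The class of morphisms `f : Y ⟶ X` admitting a diagram `(⋄)` with
`g` factoring through an object of `GCond` and `h` through an object of `HCond`. -/
def RtildeClass (GCond HCond : Set B) : MorphismProperty B :=
  fun Y X f => ∃ (OmX PX Z₁ IY SgY Z₂ : B) (q : OmX ⟶ PX) (p : PX ⟶ X)
    (j : OmX ⟶ Z₁) (g : Z₁ ⟶ Y) (i : Y ⟶ IY) (c : IY ⟶ SgY)
    (h : X ⟶ Z₂) (e : Z₂ ⟶ SgY) (u : Z₁ ⟶ PX) (v : IY ⟶ Z₂),
    DiamondDiagram f q p j g i c h e u v ∧ FactorsThru GCond g ∧ FactorsThru HCond h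

/-- The objects of the heart `ℋ` of a cotorsion pair `(U, V)`. -/
def HeartObjects (U V : Set B) : Set B :=
  {X | (∃ (VX UX : B) (i : VX ⟶ UX) (p : UX ⟶ X),
          IsSES i p ∧ VX ∈ V ∧ UX ∈ U ∩ V) ∧
       (∃ (VX UX : B) (i : X ⟶ VX) (p : VX ⟶ UX),
          IsSES i p ∧ VX ∈ U ∩ V ∧ UX ∈ U)}


-- auxiliary: the ideal relation is a congruence
lemma congruence_idealRel (H S : Set B) (hS : AddSubcat S) :
    Congruence (idealRel H S) where
  equivalence := by
    intro X Y
    constructor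
    · intro f
      exact ⟨0, 0, 0, hS.zero_mem, by simp⟩
    · rintro f g ⟨Z, u, v, hZ, huv⟩
      exact ⟨Z, -u, v, hZ, by
        simp only [Preadditive.neg_comp, huv]; abel⟩
    · rintro f g h ⟨Z₁, u₁, v₁, hZ₁, h₁⟩ ⟨Z₂, u₂, v₂, hZ₂, h₂⟩
      refine ⟨Z₁ ⊞ Z₂, biprod.lift u₁ u₂, biprod.desc v₁ v₂, hS.sum_closed hZ₁ hZ₂, ?_⟩
      rw [biprod.lift_desc, h₁, h₂]; show f.hom - g.hom + (g.hom - h.hom) = f.hom - h.hom; abel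
  comp_left := by
    rintro X Y Z f g g' ⟨W, u, v, hW, huv⟩
    exact ⟨W, f.hom ≫ u, v, hW, by
      rw [assoc, huv]
      show _ = f.hom ≫ g.hom - f.hom ≫ g'.hom
      rw [← Preadditive.comp_sub]⟩
  comp_right := by
    rintro X Y Z f f' g ⟨W, u, v, hW, huv⟩
    exact ⟨W, u, v ≫ g.hom, hW, by
      rw [← assoc, huv]
      show _ = f.hom ≫ g.hom - f'.hom ≫ g.hom
      rw [← Preadditive.sub_comp]⟩

-- auxiliary: the key factorization property
lemma factorsThru_of_comp_factorsThru [EnoughProjectives B]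
    (C D : Set B) (hC : RCP C) (hD : RCP D)
    {Y X : B} (f : Y ⟶ X)
    (happrox : IsRightApprox (CoCone D C) f)
    (hX : X ∈ CoCone C C)
    {T : B} (g : X ⟶ T) (hfg : FactorsThru C (f ≫ g)) : FactorsThru C g := by
  obtain ⟨C1, C2, x, y, hC1, hC2, wxy, hxySE⟩ := hX
  haveI := hxySE.mono_f
  haveI := hxySE.epi_g
  -- projective presentation of C2
  set P : B := Projective.over C2 with hPdef
  set p : P ⟶ C2 := Projective.π C2 with hpdef
  set Om : B := kernel p with hOmdef
  set a : Om ⟶ P := kernel.ι p with hadef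
  have wap : a ≫ p = 0 := kernel.condition p
  have SEap : (ShortComplex.mk a p wap).ShortExact :=
    ⟨ShortComplex.exact_of_f_is_kernel _ (kernelIsKernel p)⟩
  -- lift of p along y
  set l : P ⟶ C1 := Projective.factorThru p y with hldef
  have hl : l ≫ y = p := Projective.factorThru_comp p y
  -- μ : Om ⟶ X with μ ≫ x = a ≫ l
  have hxK : IsLimit (KernelFork.ofι x wxy) := hxySE.exact.fIsKernel
  obtain ⟨μ, hμ0⟩ := KernelFork.IsLimit.lift' hxK (a ≫ l)
    (by rw [assoc, hl, wap])
  have hμ : μ ≫ x = a ≫ l := hμ0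
  -- Om ∈ CoCone D C, so μ lifts along f
  have hOm : Om ∈ CoCone D C :=
    ⟨P, C2, a, p, hD.proj_mem inferInstance, hC2, wap, SEap⟩
  obtain ⟨ν, hν⟩ := happrox.2 hOm μ
  obtain ⟨W, α0, β, hW, hαβ⟩ := hfg
  set u : Om ⟶ W := ν ≫ α0 with hudef
  have hug : u ≫ β = μ ≫ g := by
    rw [hudef, assoc, hαβ, ← assoc, hν]
  -- pushout of a along u, as a cokernel
  set k' : Om ⟶ P ⊞ W := biprod.lift a (-u) with hk'def
  haveI monk' : Mono k' := Preadditive.mono_of_cancel_zero _ (by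
    intro Q s hs
    have h1 : s ≫ a = 0 := by
      have := hs =≫ biprod.fst
      simpa [hk'def] using this
    exact zero_of_comp_mono a h1)
  set E : B := cokernel k' with hEdef
  set cπ : P ⊞ W ⟶ E := cokernel.π k' with hcπdef
  set inl' : P ⟶ E := biprod.inl ≫ cπ with hinl'def
  set inr' : W ⟶ E := biprod.inr ≫ cπ with hinr'def
  have hk'eq : k' = a ≫ biprod.inl - u ≫ biprod.inr := by
    apply biprod.hom_ext <;> simp [hk'def]
  have key : a ≫ inl' = u ≫ inr' := by
    have h0 : k' ≫ cπ = 0 := cokernel.condition k'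
    rw [hk'eq, Preadditive.sub_comp] at h0
    rw [hinl'def, hinr'def, ← assoc, ← assoc]
    exact sub_eq_zero.mp h0
  have hπE0 : k' ≫ biprod.desc p (0 : W ⟶ C2) = 0 := by
    rw [hk'def, biprod.lift_desc, wap]; simp
  set πE : E ⟶ C2 := cokernel.desc k' (biprod.desc p 0) hπE0 with hπEdef
  have hinlπE : inl' ≫ πE = p := by
    rw [hinl'def, hπEdef, assoc, cokernel.π_desc, biprod.inl_desc]
  have hinrπE : inr' ≫ πE = 0 := by
    rw [hinr'def, hπEdef, assoc, cokernel.π_desc, biprod.inr_desc]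
  haveI epiπE : Epi πE := by
    have : Epi (inl' ≫ πE) := by rw [hinlπE]; infer_instance
    exact epi_of_epi inl' πE
  -- Mono inr'
  have exk' : (ShortComplex.mk k' cπ (cokernel.condition k')).Exact :=
    ShortComplex.exact_of_g_is_cokernel _ (cokernelIsCokernel k')
  have hkK : IsLimit (KernelFork.ofι k' (cokernel.condition k')) := exk'.fIsKernel
  haveI monoinr' : Mono inr' := Preadditive.mono_of_cancel_zero _ (by
    intro Q t ht
    obtain ⟨s, hs⟩ := KernelFork.IsLimit.lift' hkK (t ≫ biprod.inr)
      (by rw [assoc]; exact ht)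
    have hs1 : s ≫ a = 0 := by
      have := hs =≫ biprod.fst
      simpa [hk'def] using this
    have hs0 : s = 0 := zero_of_comp_mono a hs1
    have h2 : t ≫ (biprod.inr : W ⟶ P ⊞ W) = 0 := by rw [← hs, hs0, zero_comp]
    have h3 : t = (t ≫ (biprod.inr : W ⟶ P ⊞ W)) ≫ biprod.snd := by
      rw [assoc, biprod.inr_snd, comp_id]
    rw [h3, h2, zero_comp])
  -- πE is a cokernel of inr'
  have isCoπE : IsColimit (CokernelCofork.ofπ πE hinrπE) := by
    refine CokernelCofork.IsColimit.ofπ' πE hinrπE ?_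
    intro A t ht
    have h1 : a ≫ (inl' ≫ t) = 0 := by
      rw [← assoc, key, assoc, ht, comp_zero]
    obtain ⟨s, hsp0⟩ := CokernelCofork.IsColimit.desc' SEap.exact.gIsCokernel (inl' ≫ t) h1
    have hsp : p ≫ s = inl' ≫ t := hsp0
    refine ⟨s, ?_⟩
    rw [← cancel_epi cπ]
    apply biprod.hom_ext'
    · simp only [← assoc]
      rw [← hinl'def, hinlπE]
      exact hsp
    · simp only [← assoc]
      rw [← hinr'def, hinrπE, zero_comp]
      exact ht.symm
  have SE2 : (ShortComplex.mk inr' πE hinrπE).ShortExact :=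
    ⟨ShortComplex.exact_of_g_is_cokernel _ isCoπE⟩
  -- Ext¹(C2, W) = 0 gives a section, then a retraction r : E ⟶ W
  obtain ⟨s2, hs2⟩ := hC.rigid hC2 hW inr' πE ⟨hinrπE, SE2⟩
  have hker2 : IsLimit (KernelFork.ofι inr' hinrπE) := SE2.exact.fIsKernel
  obtain ⟨r, hr0⟩ := KernelFork.IsLimit.lift' hker2 (𝟙 E - πE ≫ s2)
    (by rw [Preadditive.sub_comp, id_comp, assoc, hs2, comp_id, sub_self])
  have hr : r ≫ inr' = 𝟙 E - πE ≫ s2 := hr0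
  have hrr : inr' ≫ r = 𝟙 W := by
    rw [← cancel_mono inr', assoc, hr, Preadditive.comp_sub, comp_id, ← assoc,
      hinrπE, zero_comp, sub_zero, id_comp]
  set θW : P ⟶ W := inl' ≫ r with hθWdef
  have haθW : a ≫ θW = u := by
    rw [hθWdef, ← assoc, key, assoc, hrr, comp_id]
  set θ : P ⟶ T := θW ≫ β with hθdef
  have haθ : a ≫ θ = μ ≫ g := by
    rw [hθdef, ← assoc, haθW, hug]
  -- second SES : 0 → Om → X ⊞ P → C1 → 0
  set k : Om ⟶ X ⊞ P := biprod.lift μ (-a) with hkdef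
  set e : X ⊞ P ⟶ C1 := biprod.desc x l with hedef
  have wke : k ≫ e = 0 := by
    rw [hkdef, hedef, biprod.lift_desc, hμ, Preadditive.neg_comp]; simp
  haveI epie : Epi e := Preadditive.epi_of_cancel_zero _ (by
    intro R c hc
    have hx1 : x ≫ c = 0 := by
      rw [← biprod.inl_desc x l, ← hedef, assoc, hc, comp_zero]
    have hl2 : l ≫ c = 0 := by
      rw [← biprod.inr_desc x l, ← hedef, assoc, hc, comp_zero]
    obtain ⟨c', hc'0⟩ := CokernelCofork.IsColimit.desc' hxySE.exact.gIsCokernel c hx1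
    have hc' : y ≫ c' = c := hc'0
    have hpc' : p ≫ c' = 0 := by rw [← hl, assoc, hc', hl2]
    have c'0 : c' = 0 := by
      rw [← cancel_epi p, hpc', comp_zero]
    rw [← hc', c'0, comp_zero])
  haveI monk : Mono k := Preadditive.mono_of_cancel_zero _ (by
    intro Q s hs
    have h1 : s ≫ a = 0 := by
      have := hs =≫ biprod.snd
      simp only [hkdef, assoc, biprod.lift_snd, zero_comp,
        Preadditive.comp_neg, neg_eq_zero] at this
      exact this
    exact zero_of_comp_mono a h1)
  -- k is a kernel of e
  have kIsKer : IsLimit (KernelFork.ofι k wke) := by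
    refine KernelFork.IsLimit.ofι' k wke ?_
    intro A t ht
    have h0 : t ≫ biprod.fst ≫ x + t ≫ biprod.snd ≫ l = 0 := by
      have h0' : t ≫ e = 0 := ht
      rw [hedef, biprod.desc_eq, Preadditive.comp_add, ← assoc, ← assoc] at h0'
      rw [← assoc, ← assoc]
      exact h0'
    have hp2 : (t ≫ biprod.snd) ≫ p = 0 := by
      have h5 : (t ≫ biprod.snd) ≫ l = -((t ≫ biprod.fst) ≫ x) := by
        rw [eq_neg_iff_add_eq_zero, add_comm, assoc, assoc]
        exact h0
      rw [← hl, ← assoc, h5, Preadditive.neg_comp, assoc, wxy, comp_zero, neg_zero]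
    set w0 : A ⟶ Om := kernel.lift p (t ≫ biprod.snd) hp2 with hw0def
    have hwa : w0 ≫ a = t ≫ biprod.snd := kernel.lift_ι p _ hp2
    refine ⟨-w0, ?_⟩
    apply biprod.hom_ext
    · rw [assoc, hkdef, biprod.lift_fst, ← cancel_mono x]
      have e1 : ((-w0) ≫ μ) ≫ x = -((t ≫ biprod.snd) ≫ l) := by
        rw [Preadditive.neg_comp, Preadditive.neg_comp, assoc, hμ, ← assoc, hwa]
      have e2 : (t ≫ biprod.fst) ≫ x = -((t ≫ biprod.snd) ≫ l) := by
        rw [eq_neg_iff_add_eq_zero, assoc, assoc]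
        exact h0
      rw [e1, e2]
    · rw [assoc, hkdef, biprod.lift_snd, Preadditive.neg_comp, Preadditive.comp_neg,
        neg_neg, hwa]
  have exke : (ShortComplex.mk k e wke).Exact :=
    ShortComplex.exact_of_f_is_kernel _ kIsKer
  have eIsCoker : IsColimit (CokernelCofork.ofπ e wke) := exke.gIsCokernel
  set h : X ⊞ P ⟶ T := biprod.desc g θ with hhdef
  have hkh : k ≫ h = 0 := by
    rw [hkdef, hhdef, biprod.lift_desc, Preadditive.neg_comp, haθ]; simp
  obtain ⟨τ, hτ0⟩ := CokernelCofork.IsColimit.desc' eIsCoker h hkh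
  have hτ : e ≫ τ = h := hτ0
  refine ⟨C1, x, τ, hC1, ?_⟩
  rw [← biprod.inl_desc x l, ← hedef, assoc, hτ, hhdef, biprod.inl_desc]

/-- a right `ℋ_𝒟`-approximation of an object of `ℋ` with kernel in
`𝒟^⊥¹` becomes an epimorphism in the heart. -/
theorem statement_5 {B : Type u} [Category.{v} B] [Abelian B]
    [EnoughProjectives B] [EnoughInjectives B]
    (C D : Set B) (hC : RCP C) (hD : RCP D) (hDC : D ⊆ C)
    {Z Y X : B} (i : Z ⟶ Y) (f : Y ⟶ X)
    (hses : IsSES i f) (hY : Y ∈ CoCone D C)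
    (happrox : IsRightApprox (CoCone D C) f) (hZ : Z ∈ rightPerp D)
    (hX : X ∈ CoCone C C) (hY' : Y ∈ CoCone C C) :
    Epi ((heartQ (CoCone C C) C).map (X := ⟨Y, hY'⟩) (Y := ⟨X, hX⟩) (ObjectProperty.homMk f)) := by
  haveI : Congruence (idealRel (CoCone C C) C) := congruence_idealRel _ _ hC.add
  constructor
  intro T g₁ g₂ hgg
  obtain ⟨a₁, rfl⟩ := (heartQ (CoCone C C) C).map_surjective
    (X := ⟨X, hX⟩) (Y := T.as) g₁
  obtain ⟨a₂, rfl⟩ := (heartQ (CoCone C C) C).map_surjective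
    (X := ⟨X, hX⟩) (Y := T.as) g₂
  rw [← Functor.map_comp, ← Functor.map_comp] at hgg
  replace hgg := (Quotient.functor_map_eq_iff (idealRel (CoCone C C) C) _ _).mp hgg
  obtain ⟨W, uu, vv, hWmem, huv⟩ := hgg
  have hfact : FactorsThru C (f ≫ (a₁.hom - a₂.hom)) := ⟨W, uu, vv, hWmem, by
    rw [huv]
    show _ = f ≫ (a₁.hom - a₂.hom)
    rw [Preadditive.comp_sub]
    rfl⟩
  have hkey : FactorsThru C (a₁.hom - a₂.hom : X ⟶ T.as.obj) :=
    factorsThru_of_comp_factorsThru C D hC hD f happrox hX _ hfact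
  apply CategoryTheory.Quotient.sound
  exact hkey


end CotorsionPaper
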